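/- Let V be a finite-dimensional real inner product space, and let Ω and K be self-adjoint linear operators on V such that Ω is positive definite and there exists η > 0 with ⟨X, (Ω + K)X⟩ ≥ η‖X‖² for all X ∈ V. Then every eigenvalue of the operator Id + Ω^{−1}K is real and bounded below by η/‖Ω‖_op, where ‖Ω‖_op is the operator norm of Ω. In particular all eigenvalues of Id + Ω^{−1}K are strictly positive. -/

import Mathlib

open Complex in
lemma quad_form_real' {V : Type*} [NormedAddCommGroup V] [InnerProductSpace ℝ V]
    {n : ℕ} (b : Fin n → V) (T : V →ₗ[ℝ] V)
    (hT : ∀ u v : V, (inner ℝ (T u) v : ℝ) = inner ℝ u (T v))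
    (z : Fin n → ℂ) :
    ∑ i, ∑ k, (starRingEnd ℂ) (z i) * z k * ((inner ℝ (b i) (T (b k)) : ℝ) : ℂ)
      = ((((inner ℝ (∑ i, (z i).re • b i) (T (∑ i, (z i).re • b i)) : ℝ)
        + (inner ℝ (∑ i, (z i).im • b i) (T (∑ i, (z i).im • b i)) : ℝ)) : ℝ) : ℂ) := by
  set t : Fin n → Fin n → ℝ := fun i k => inner ℝ (b i) (T (b k)) with htdef
  have ht : ∀ i k, t i k = t k i := by
    intro i k
    show (inner ℝ (b i) (T (b k)) : ℝ) = inner ℝ (b k) (T (b i))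
    rw [← hT]
    exact real_inner_comm _ _
  set x : Fin n → ℝ := fun i => (z i).re
  set y : Fin n → ℝ := fun i => (z i).im
  have hxq : ∀ p : Fin n → ℝ, (inner ℝ (∑ i, p i • b i) (T (∑ k, p k • b k)) : ℝ)
      = ∑ i, ∑ k, p i * p k * t i k := by
    intro p
    simp only [map_sum, map_smul, inner_sum, sum_inner, real_inner_smul_left,
      real_inner_smul_right]
    simp only [Finset.mul_sum, mul_assoc, t]
    refine Finset.sum_congr rfl fun i _ => Finset.sum_congr rfl fun k _ => ?_
    have h := ht i k
    simp only [htdef] at h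
    rw [← h]
  have hswap : ∑ i, ∑ k, x i * y k * t i k = ∑ i, ∑ k, y i * x k * t i k := by
    rw [Finset.sum_comm]
    refine Finset.sum_congr rfl fun i _ => Finset.sum_congr rfl fun k _ => ?_
    rw [ht k i]; ring
  apply Complex.ext
  · simp only [Complex.re_sum, Complex.ofReal_re]
    rw [hxq x, hxq y]
    rw [← Finset.sum_add_distrib]
    refine Finset.sum_congr rfl fun i _ => ?_
    rw [← Finset.sum_add_distrib]
    refine Finset.sum_congr rfl fun k _ => ?_
    simp [Complex.mul_re, Complex.mul_im, x, y]
    ring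
  · simp only [Complex.im_sum, Complex.ofReal_im]
    have : ∀ i, ∑ k, ((starRingEnd ℂ) (z i) * z k * ((t i k : ℝ) : ℂ)).im
        = ∑ k, (x i * y k * t i k - y i * x k * t i k) := by
      intro i
      refine Finset.sum_congr rfl fun k _ => ?_
      simp [Complex.mul_re, Complex.mul_im, x, y]
      ring
    simp only [htdef] at this hswap
    simp only [this, Finset.sum_sub_distrib, hswap, sub_self]

open Complex in
lemma pairing_key {V : Type*} [NormedAddCommGroup V] [InnerProductSpace ℝ V]
    [FiniteDimensional ℝ V] {n : ℕ} (b : Module.Basis (Fin n) ℝ V) (T : V →ₗ[ℝ] V)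
    (z : Fin n → ℂ) :
    ∑ i, ∑ j, (starRingEnd ℂ) (z i) * ((inner ℝ (b i) (b j) : ℝ) : ℂ)
        * (((LinearMap.toMatrix b b T).map (Complex.ofReal)).mulVec z) j
      = ∑ i, ∑ k, (starRingEnd ℂ) (z i) * z k * ((inner ℝ (b i) (T (b k)) : ℝ) : ℂ) := by
  refine Finset.sum_congr rfl fun i _ => ?_
  have hTb : ∀ k, (inner ℝ (b i) (T (b k)) : ℝ)
      = ∑ j, (LinearMap.toMatrix b b T) j k * inner ℝ (b i) (b j) := by
    intro k
    conv_lhs => rw [← Module.Basis.sum_repr b (T (b k))]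
    rw [inner_sum]
    simp [inner_sum, real_inner_smul_right, LinearMap.toMatrix_apply, mul_comm]
  simp only [Matrix.mulVec, dotProduct, Matrix.map_apply, hTb]
  push_cast
  simp only [Finset.mul_sum]
  rw [Finset.sum_comm]
  refine Finset.sum_congr rfl fun j _ => Finset.sum_congr rfl fun k _ => ?_
  ring


/-- if `Ω` is positive definite self-adjoint, `K` self-adjoint, and
`⟨X,(Ω+K)X⟩ ≥ η‖X‖²`, then every (complex) eigenvalue of `Id + Ω⁻¹K` is real,
bounded below by `η/‖Ω‖_op`, and in particular strictly positive. A complex number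
`μ` is an eigenvalue of `Id + Ω⁻¹K` iff `det((1−μ)A + B) = 0` where `A`, `B` are the
(complexified) matrices of `Ω`, `K` in a basis, since `(1−μ)A + B = A(Id + A⁻¹B − μ)`. -/
theorem scf_jacobian_spectrum_real_positive
    {V : Type*} [NormedAddCommGroup V] [InnerProductSpace ℝ V] [FiniteDimensional ℝ V]
    (Om K : V →L[ℝ] V)
    (hOmSa : ∀ x y : V, (inner ℝ (Om x) y : ℝ) = inner ℝ x (Om y))
    (hKSa : ∀ x y : V, (inner ℝ (K x) y : ℝ) = inner ℝ x (K y))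
    (hOmPos : ∀ x : V, x ≠ 0 → (0 : ℝ) < inner ℝ x (Om x))
    (η : ℝ) (hη : 0 < η)
    (hcoer : ∀ x : V, η * ‖x‖ ^ 2 ≤ (inner ℝ x (Om x + K x) : ℝ)) :
    ∀ μ : ℂ,
      (((1 - μ) • ((LinearMap.toMatrix (Module.finBasis ℝ V) (Module.finBasis ℝ V)
            (Om : V →ₗ[ℝ] V)).map Complex.ofReal) +
          ((LinearMap.toMatrix (Module.finBasis ℝ V) (Module.finBasis ℝ V)
            (K : V →ₗ[ℝ] V)).map Complex.ofReal)).det = 0) →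
      μ.im = 0 ∧ η / ‖Om‖ ≤ μ.re ∧ 0 < μ.re := by
  intro μ hdet
  classical
  set b := Module.finBasis ℝ V with hbdef
  set A' := ((LinearMap.toMatrix b b (Om : V →ₗ[ℝ] V)).map Complex.ofReal) with hA'
  set B' := ((LinearMap.toMatrix b b (K : V →ₗ[ℝ] V)).map Complex.ofReal) with hB'
  obtain ⟨z, hz0, hz⟩ := Matrix.exists_mulVec_eq_zero_iff.mpr hdet
  -- rearrange the kernel equation
  have heq : A'.mulVec z + B'.mulVec z = μ • A'.mulVec z := by
    rw [Matrix.add_mulVec, Matrix.smul_mulVec] at hz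
    have h1 : (1 - μ) • A'.mulVec z = A'.mulVec z - μ • A'.mulVec z := by
      rw [sub_smul, one_smul]
    rw [h1] at hz
    have h2 : A'.mulVec z + B'.mulVec z - μ • A'.mulVec z = 0 := by
      rw [← hz]; abel
    exact sub_eq_zero.mp h2
  -- the sesquilinear pairing of z against both sides of heq
  have hsum : ∑ i, ∑ j, (starRingEnd ℂ) (z i) * ((inner ℝ (b i) (b j) : ℝ) : ℂ)
        * ((A'.mulVec z + B'.mulVec z) j)
      = ∑ i, ∑ j, (starRingEnd ℂ) (z i) * ((inner ℝ (b i) (b j) : ℝ) : ℂ)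
        * ((μ • A'.mulVec z) j) := by rw [heq]
  have hsplit : ∑ i, ∑ j, (starRingEnd ℂ) (z i) * ((inner ℝ (b i) (b j) : ℝ) : ℂ)
        * ((A'.mulVec z + B'.mulVec z) j)
      = (∑ i, ∑ j, (starRingEnd ℂ) (z i) * ((inner ℝ (b i) (b j) : ℝ) : ℂ)
          * (A'.mulVec z j))
        + ∑ i, ∑ j, (starRingEnd ℂ) (z i) * ((inner ℝ (b i) (b j) : ℝ) : ℂ)
          * (B'.mulVec z j) := by
    simp [Pi.add_apply, mul_add, Finset.sum_add_distrib]
  have hmu : ∑ i, ∑ j, (starRingEnd ℂ) (z i) * ((inner ℝ (b i) (b j) : ℝ) : ℂ)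
        * ((μ • A'.mulVec z) j)
      = μ * ∑ i, ∑ j, (starRingEnd ℂ) (z i) * ((inner ℝ (b i) (b j) : ℝ) : ℂ)
        * (A'.mulVec z j) := by
    simp only [Pi.smul_apply, smul_eq_mul, Finset.mul_sum]
    refine Finset.sum_congr rfl fun i _ => Finset.sum_congr rfl fun j _ => by ring
  have hOmQ := (pairing_key b (Om : V →ₗ[ℝ] V) z).trans
    (quad_form_real' b (Om : V →ₗ[ℝ] V) hOmSa z)
  have hKQ := (pairing_key b (K : V →ₗ[ℝ] V) z).trans
    (quad_form_real' b (K : V →ₗ[ℝ] V) hKSa z)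
  rw [hsplit, hmu, hOmQ, hKQ] at hsum
  set vx : V := ∑ i, (z i).re • b i with hvx
  set vy : V := ∑ i, (z i).im • b i with hvy
  set POm : ℝ := inner ℝ vx (Om vx) + inner ℝ vy (Om vy) with hPOm
  set PK : ℝ := inner ℝ vx (K vx) + inner ℝ vy (K vy) with hPK
  have hceq : ((POm : ℝ) : ℂ) + ((PK : ℝ) : ℂ) = μ * ((POm : ℝ) : ℂ) := hsum
  -- nontriviality: vx ≠ 0 or vy ≠ 0
  have hvne : vx ≠ 0 ∨ vy ≠ 0 := by
    by_contra h
    push_neg at h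
    apply hz0
    have hx0 : (fun i => (z i).re) = (0 : Fin (Module.finrank ℝ V) → ℝ) := by
      apply b.equivFun.symm.injective
      simp only [Module.Basis.equivFun_symm_apply, map_zero]
      rw [← hvx]
      exact h.1
    have hy0 : (fun i => (z i).im) = (0 : Fin (Module.finrank ℝ V) → ℝ) := by
      apply b.equivFun.symm.injective
      simp only [Module.Basis.equivFun_symm_apply, map_zero]
      rw [← hvy]
      exact h.2
    funext i
    exact Complex.ext (congrFun hx0 i) (congrFun hy0 i)
  have hquadnonneg : ∀ v : V, (0:ℝ) ≤ inner ℝ v (Om v) := by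
    intro v
    rcases eq_or_ne v 0 with h | h
    · simp [h]
    · exact le_of_lt (hOmPos v h)
  have hPOmpos : 0 < POm := by
    rcases hvne with h | h
    · have := hOmPos vx h
      have := hquadnonneg vy
      rw [hPOm]; linarith
    · have := hOmPos vy h
      have := hquadnonneg vx
      rw [hPOm]; linarith
  set s : ℝ := ‖vx‖ ^ 2 + ‖vy‖ ^ 2 with hs
  have hspos : 0 < s := by
    rcases hvne with h | h
    · have h1 : 0 < ‖vx‖ ^ 2 := by
        have := norm_pos_iff.mpr h; positivity
      have h2 : 0 ≤ ‖vy‖ ^ 2 := by positivity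
      rw [hs]; linarith
    · have h1 : 0 < ‖vy‖ ^ 2 := by
        have := norm_pos_iff.mpr h; positivity
      have h2 : 0 ≤ ‖vx‖ ^ 2 := by positivity
      rw [hs]; linarith
  have hPlow : η * s ≤ POm + PK := by
    have h1 := hcoer vx
    have h2 := hcoer vy
    simp only [inner_add_right] at h1 h2
    rw [hPOm, hPK, hs]; ring_nf; ring_nf at h1 h2; linarith
  have hPOmle : POm ≤ ‖Om‖ * s := by
    have hb1 : ∀ v : V, (inner ℝ v (Om v) : ℝ) ≤ ‖Om‖ * ‖v‖ ^ 2 := by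
      intro v
      calc (inner ℝ v (Om v) : ℝ) ≤ ‖v‖ * ‖Om v‖ := real_inner_le_norm _ _
        _ ≤ ‖v‖ * (‖Om‖ * ‖v‖) := by
            have := Om.le_opNorm v
            have h0 : (0:ℝ) ≤ ‖v‖ := norm_nonneg _
            nlinarith
        _ = ‖Om‖ * ‖v‖ ^ 2 := by ring
    rw [hPOm, hs]
    have := hb1 vx
    have := hb1 vy
    linarith [hb1 vx, hb1 vy]
  have hOmnorm : 0 < ‖Om‖ := by
    rcases lt_or_eq_of_le (norm_nonneg Om) with h | h
    · exact h
    · exfalso; rw [← h] at hPOmle; simp at hPOmle; linarith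
  -- extract real and imaginary parts
  have him : μ.im = 0 := by
    have := congrArg Complex.im hceq
    simp [Complex.mul_im] at this
    rcases this with h | h
    · exact h
    · exact absurd h (ne_of_gt hPOmpos)
  have hre : POm + PK = μ.re * POm := by
    have := congrArg Complex.re hceq
    simpa [Complex.mul_re, him] using this
  refine ⟨him, ?_, ?_⟩
  · rw [div_le_iff₀ hOmnorm]
    have hmupos : 0 < μ.re := by nlinarith
    nlinarith
  · nlinarith
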